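/- Let X^L, Û^L be finite-alphabet random vectors of length L where, for each i, X̂_i is a deterministic function of (U, X^{i−1}) for a random variable U (the codetree) — i.e., X̂^i is a function of (U, X^{i−1}). Then I(X^L; U) ≥ Σ_{i=1}^L I(X_i; X̂^i | X^{i−1}), the right-hand side equaling the directed information I(X̂^L → X^L). -/

import Mathlib

open scoped Classical

/-- Shannon entropy (base 2) of a finitely supported distribution. -/
noncomputable def ent {α : Type*} [Fintype α] (p : α → ℝ) : ℝ :=
  -∑ x, p x * Real.logb 2 (p x)

/-- Distribution (pushforward of the probability mass function `μ`) of a random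
variable `X` on a finite probability space. -/
noncomputable def dist {Ω α : Type*} [Fintype Ω] (μ : Ω → ℝ) (X : Ω → α) : α → ℝ :=
  fun a => ∑ ω, if X ω = a then μ ω else 0

/-- Entropy of a random variable. -/
noncomputable def Hrv {Ω α : Type*} [Fintype Ω] [Fintype α] (μ : Ω → ℝ) (X : Ω → α) : ℝ :=
  ent (dist μ X)

/-- Mutual information `I(X;Y) = H(X) + H(Y) - H(X,Y)`. -/
noncomputable def mutInf {Ω α β : Type*} [Fintype Ω] [Fintype α] [Fintype β]
    (μ : Ω → ℝ) (X : Ω → α) (Y : Ω → β) : ℝ :=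
  Hrv μ X + Hrv μ Y - Hrv μ (fun ω => (X ω, Y ω))

/-- Conditional entropy `H(X|Y) = H(X,Y) - H(Y)`. -/
noncomputable def condEnt {Ω α β : Type*} [Fintype Ω] [Fintype α] [Fintype β]
    (μ : Ω → ℝ) (X : Ω → α) (Y : Ω → β) : ℝ :=
  Hrv μ (fun ω => (X ω, Y ω)) - Hrv μ Y

/-- Conditional mutual information
`I(X;Y|Z) = H(X,Z) + H(Y,Z) - H(X,Y,Z) - H(Z)`. -/
noncomputable def condMutInf {Ω α β γ : Type*} [Fintype Ω] [Fintype α] [Fintype β] [Fintype γ]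
    (μ : Ω → ℝ) (X : Ω → α) (Y : Ω → β) (Z : Ω → γ) : ℝ :=
  Hrv μ (fun ω => (X ω, Z ω)) + Hrv μ (fun ω => (Y ω, Z ω)) -
    Hrv μ (fun ω => (X ω, Y ω, Z ω)) - Hrv μ Z

/-- The length-`k` prefix `X^k` of a vector of random variables, padded with `default`. -/
def pref {Ω α : Type*} [Inhabited α] {L : ℕ} (X : Fin L → Ω → α) (k : ℕ) :
    Ω → (Fin L → α) := fun ω j => if (j : ℕ) < k then X j ω else default

-- AUX START
lemma dist_nonneg' {Ω α : Type*} [Fintype Ω] (μ : Ω → ℝ) (hμ0 : ∀ ω, 0 ≤ μ ω)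
    (X : Ω → α) (a : α) : 0 ≤ dist μ X a := by
  apply Finset.sum_nonneg
  intro ω _
  split <;> simp [hμ0 ω]

lemma attained_of_dist_ne {Ω α : Type*} [Fintype Ω] (μ : Ω → ℝ)
    (X : Ω → α) (a : α) (h : dist μ X a ≠ 0) : ∃ ω, X ω = a := by
  by_contra hc
  push_neg at hc
  exact h (Finset.sum_eq_zero fun ω _ => if_neg (hc ω))

lemma dist_push {Ω α β : Type*} [Fintype Ω]
    (μ : Ω → ℝ) (X : Ω → α) (Y : Ω → β)
    (g : α → β) (h : β → α) (hg : ∀ ω, Y ω = g (X ω)) (hh : ∀ ω, X ω = h (Y ω))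
    (a : α) (ha : ∃ ω, X ω = a) :
    dist μ Y (g a) = dist μ X a := by
  obtain ⟨ω0, hω0⟩ := ha
  refine Finset.sum_congr rfl fun ω _ => ?_
  have : Y ω = g a ↔ X ω = a := by
    constructor
    · intro he
      have : X ω = h (g a) := by rw [hh ω, he]
      rw [this, ← hω0, ← hg ω0, ← hh ω0, hω0]
    · intro he
      rw [hg ω, he]
  simp only [this]

lemma Hrv_congr {Ω α β : Type*} [Fintype Ω] [Fintype α] [Fintype β]
    (μ : Ω → ℝ) (X : Ω → α) (Y : Ω → β)
    (g : α → β) (h : β → α) (hg : ∀ ω, Y ω = g (X ω)) (hh : ∀ ω, X ω = h (Y ω)) :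
    Hrv μ X = Hrv μ Y := by
  unfold Hrv ent
  congr 1
  set p := dist μ X with hp
  set q := dist μ Y with hq
  have key : ∀ a, (∃ ω, X ω = a) → q (g a) = p a := fun a ha =>
    dist_push μ X Y g h hg hh a ha
  have key' : ∀ b, (∃ ω, Y ω = b) → p (h b) = q b := fun b hb =>
    dist_push μ Y X h g hh hg b hb
  have hleft : ∀ a, (∃ ω, X ω = a) → h (g a) = a := by
    rintro a ⟨ω, rfl⟩
    rw [← hg ω, ← hh ω]
  have hright : ∀ b, (∃ ω, Y ω = b) → g (h b) = b := by
    rintro b ⟨ω, rfl⟩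
    rw [← hh ω, ← hg ω]
  rw [← Finset.sum_filter_of_ne (s := Finset.univ)
      (p := fun a => p a ≠ 0) (f := fun a => p a * Real.logb 2 (p a))
      (by intro a _ hne hz; exact hne (by simp [hz])),
    ← Finset.sum_filter_of_ne (s := Finset.univ)
      (p := fun b => q b ≠ 0) (f := fun b => q b * Real.logb 2 (q b))
      (by intro b _ hne hz; exact hne (by simp [hz]))]
  refine Finset.sum_nbij' g h ?_ ?_ ?_ ?_ ?_
  · intro a ha
    simp only [Finset.mem_filter, Finset.mem_univ, true_and] at ha ⊢
    rw [key a (attained_of_dist_ne μ X a ha)]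
    exact ha
  · intro b hb
    simp only [Finset.mem_filter, Finset.mem_univ, true_and] at hb ⊢
    rw [key' b (attained_of_dist_ne μ Y b hb)]
    exact hb
  · intro a ha
    simp only [Finset.mem_filter, Finset.mem_univ, true_and] at ha
    exact hleft a (attained_of_dist_ne μ X a ha)
  · intro b hb
    simp only [Finset.mem_filter, Finset.mem_univ, true_and] at hb
    exact hright b (attained_of_dist_ne μ Y b hb)
  · intro a ha
    simp only [Finset.mem_filter, Finset.mem_univ, true_and] at ha
    rw [key a (attained_of_dist_ne μ X a ha)]

lemma gibbs_term (p A B V : ℝ) (hp : 0 ≤ p) (hA : p ≤ A) (hB : p ≤ B) (hV : A ≤ V) :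
    p * Real.log A + p * Real.log B - p * Real.log p - p * Real.log V
      ≤ (if p = 0 then 0 else A * B / V) - p := by
  rcases eq_or_lt_of_le hp with h0 | h0
  · simp [← h0]
  · have hA' : 0 < A := lt_of_lt_of_le h0 hA
    have hB' : 0 < B := lt_of_lt_of_le h0 hB
    have hV' : 0 < V := lt_of_lt_of_le hA' hV
    rw [if_neg (ne_of_gt h0)]
    have hx : (0:ℝ) < A * B / (p * V) := by positivity
    have hlog : Real.log (A * B / (p * V)) ≤ A * B / (p * V) - 1 :=
      Real.log_le_sub_one_of_pos hx
    have hexp : Real.log (A * B / (p * V))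
        = Real.log A + Real.log B - Real.log p - Real.log V := by
      rw [Real.log_div (by positivity) (by positivity),
        Real.log_mul (ne_of_gt hA') (ne_of_gt hB'),
        Real.log_mul (ne_of_gt h0) (ne_of_gt hV')]
      ring
    have hmul := mul_le_mul_of_nonneg_left hlog (le_of_lt h0)
    have heq : p * (A * B / (p * V) - 1) = A * B / V - p := by
      field_simp
    rw [hexp] at hmul
    rw [← heq]
    linarith [hmul]

lemma nl_key {α β γ : Type*} [Fintype α] [Fintype β] [Fintype γ]
    (p : α → β → γ → ℝ) (hp : ∀ a b v, 0 ≤ p a b v) :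
    ∑ a, ∑ b, ∑ v, (p a b v * Real.log (∑ b', p a b' v)
      + p a b v * Real.log (∑ a', p a' b v)
      - p a b v * Real.log (p a b v)
      - p a b v * Real.log (∑ a', ∑ b', p a' b' v)) ≤ 0 := by
  classical
  set A : α → γ → ℝ := fun a v => ∑ b', p a b' v with hAdef
  set B : β → γ → ℝ := fun b v => ∑ a', p a' b v with hBdef
  set V : γ → ℝ := fun v => ∑ a', ∑ b', p a' b' v with hVdef
  have hA0 : ∀ a v, 0 ≤ A a v := fun a v => Finset.sum_nonneg fun b _ => hp a b v
  have hB0 : ∀ b v, 0 ≤ B b v := fun b v => Finset.sum_nonneg fun a _ => hp a b v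
  have hpA : ∀ a b v, p a b v ≤ A a v := fun a b v =>
    Finset.single_le_sum (fun b' _ => hp a b' v) (Finset.mem_univ b)
  have hpB : ∀ a b v, p a b v ≤ B b v := fun a b v =>
    Finset.single_le_sum (fun a' _ => hp a' b v) (Finset.mem_univ a)
  have hAV : ∀ a v, A a v ≤ V v := fun a v =>
    Finset.single_le_sum (fun a' _ => hA0 a' v) (Finset.mem_univ a)
  have step1 : ∑ a, ∑ b, ∑ v, (p a b v * Real.log (A a v)
      + p a b v * Real.log (B b v) - p a b v * Real.log (p a b v)
      - p a b v * Real.log (V v))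
      ≤ ∑ a, ∑ b, ∑ v, ((if p a b v = 0 then 0 else A a v * B b v / V v) - p a b v) := by
    refine Finset.sum_le_sum fun a _ => Finset.sum_le_sum fun b _ =>
      Finset.sum_le_sum fun v _ => ?_
    exact gibbs_term (p a b v) (A a v) (B b v) (V v) (hp a b v) (hpA a b v)
      (hpB a b v) (hAV a v)
  refine le_trans step1 ?_
  have hrot : ∀ (t : α → β → γ → ℝ), ∑ a, ∑ b, ∑ v, t a b v = ∑ v, ∑ a, ∑ b, t a b v := by
    intro t
    have h1 : ∀ a, ∑ b, ∑ v, t a b v = ∑ v, ∑ b, t a b v := fun a => Finset.sum_comm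
    simp_rw [h1]
    exact Finset.sum_comm
  have hsplit : ∑ a, ∑ b, ∑ v, ((if p a b v = 0 then 0 else A a v * B b v / V v) - p a b v)
      = (∑ v, ∑ a, ∑ b, (if p a b v = 0 then 0 else A a v * B b v / V v)) - ∑ v, V v := by
    simp_rw [Finset.sum_sub_distrib]
    rw [hrot (fun a b v => if p a b v = 0 then 0 else A a v * B b v / V v),
      hrot (fun a b v => p a b v)]
  rw [hsplit, sub_nonpos]
  refine Finset.sum_le_sum fun v _ => ?_
  by_cases hV : V v = 0
  · have hz : ∀ a b, p a b v = 0 := by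
      intro a b
      have := le_trans (hpA a b v) (hAV a v)
      have h0 := hp a b v
      rw [hV] at this
      linarith
    simp [hz, hV, le_refl]
  · have hVpos : 0 < V v := lt_of_le_of_ne (Finset.sum_nonneg fun a _ => hA0 a v) (Ne.symm hV)
    calc ∑ a, ∑ b, (if p a b v = 0 then 0 else A a v * B b v / V v)
        ≤ ∑ a, ∑ b, A a v * B b v / V v := by
          refine Finset.sum_le_sum fun a _ => Finset.sum_le_sum fun b _ => ?_
          split
          · exact div_nonneg (mul_nonneg (hA0 a v) (hB0 b v)) (le_of_lt hVpos)
          · exact le_refl _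
      _ = (∑ a, A a v) * (∑ b, B b v) / V v := by
          rw [Finset.sum_mul, Finset.sum_div]
          refine Finset.sum_congr rfl fun a _ => ?_
          rw [Finset.mul_sum, Finset.sum_div]
      _ = V v := by
          have h1 : ∑ a, A a v = V v := rfl
          have h2 : ∑ b, B b v = V v := Finset.sum_comm
          rw [h1, h2]
          field_simp

lemma ent_eq_log {α : Type*} [Fintype α] (p : α → ℝ) :
    ent p = -((∑ x, p x * Real.log (p x)) / Real.log 2) := by
  simp [ent, Real.logb, Finset.sum_div, mul_div_assoc]

lemma sum_rot {α β γ : Type*} [Fintype α] [Fintype β] [Fintype γ] (t : α → β → γ → ℝ) :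
    ∑ a, ∑ b, ∑ v, t a b v = ∑ v, ∑ a, ∑ b, t a b v := by
  have h1 : ∀ a, ∑ b, ∑ v, t a b v = ∑ v, ∑ b, t a b v := fun a => Finset.sum_comm
  simp_rw [h1]
  exact Finset.sum_comm

lemma ent_key {α β γ : Type*} [Fintype α] [Fintype β] [Fintype γ]
    (q : α × β × γ → ℝ) (hq : ∀ x, 0 ≤ q x) :
    ent q + ent (fun v : γ => ∑ a, ∑ b, q (a, b, v)) ≤
      ent (fun av : α × γ => ∑ b, q (av.1, b, av.2)) +
        ent (fun bv : β × γ => ∑ a, q (a, bv.1, bv.2)) := by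
  classical
  set p : α → β → γ → ℝ := fun a b v => q (a, b, v) with hpdef
  have hp : ∀ a b v, 0 ≤ p a b v := fun a b v => hq _
  have hlog2 : (0:ℝ) < Real.log 2 := Real.log_pos (by norm_num)
  simp only [ent_eq_log]
  rw [← neg_add, ← neg_add, neg_le_neg_iff, ← add_div, ← add_div]
  apply div_le_div_of_nonneg_right (c := Real.log 2) ?_ hlog2.le
  have eSq : ∑ x : α × β × γ, q x * Real.log (q x)
      = ∑ a, ∑ b, ∑ v, p a b v * Real.log (p a b v) := by
    rw [Fintype.sum_prod_type]
    exact Finset.sum_congr rfl fun a _ => Fintype.sum_prod_type _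
  have eSA : ∑ av : α × γ, (∑ b, q (av.1, b, av.2)) * Real.log (∑ b, q (av.1, b, av.2))
      = ∑ a, ∑ b, ∑ v, p a b v * Real.log (∑ b', p a b' v) := by
    rw [Fintype.sum_prod_type]
    simp_rw [Finset.sum_mul]
    exact Finset.sum_congr rfl fun a _ => Finset.sum_comm
  have eSB : ∑ bv : β × γ, (∑ a, q (a, bv.1, bv.2)) * Real.log (∑ a, q (a, bv.1, bv.2))
      = ∑ a, ∑ b, ∑ v, p a b v * Real.log (∑ a', p a' b v) := by
    rw [Fintype.sum_prod_type]
    simp_rw [Finset.sum_mul]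
    exact (sum_rot (fun b v a => p a b v * Real.log (∑ a', p a' b v)))
  have eSV : ∑ v, (∑ a, ∑ b, q (a, b, v)) * Real.log (∑ a, ∑ b, q (a, b, v))
      = ∑ a, ∑ b, ∑ v, p a b v * Real.log (∑ a', ∑ b', p a' b' v) := by
    simp_rw [Finset.sum_mul]
    exact (sum_rot (fun a b v => p a b v * Real.log (∑ a', ∑ b', p a' b' v))).symm
  have hnl := nl_key p hp
  simp_rw [Finset.sum_sub_distrib, Finset.sum_add_distrib] at hnl
  rw [eSq, eSV, eSA, eSB]
  linarith

lemma dist_marg_fst {Ω α β γ : Type*} [Fintype Ω] [Fintype β]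
    (μ : Ω → ℝ) (S : Ω → α) (T : Ω → β) (V : Ω → γ) (a : α) (v : γ) :
    dist μ (fun ω => (S ω, V ω)) (a, v)
      = ∑ b, dist μ (fun ω => (S ω, T ω, V ω)) (a, b, v) := by
  unfold _root_.dist
  beta_reduce
  rw [Finset.sum_comm]
  refine Finset.sum_congr rfl fun ω _ => ?_
  by_cases h : S ω = a ∧ V ω = v
  · simp [Prod.ext_iff, h.1, h.2]
  · rw [if_neg (by simp [Prod.ext_iff]; tauto)]
    refine (Finset.sum_eq_zero fun b _ => if_neg (by simp [Prod.ext_iff]; tauto)).symm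

lemma dist_marg_snd {Ω α β γ : Type*} [Fintype Ω] [Fintype α]
    (μ : Ω → ℝ) (S : Ω → α) (T : Ω → β) (V : Ω → γ) (b : β) (v : γ) :
    dist μ (fun ω => (T ω, V ω)) (b, v)
      = ∑ a, dist μ (fun ω => (S ω, T ω, V ω)) (a, b, v) := by
  unfold _root_.dist
  beta_reduce
  rw [Finset.sum_comm]
  refine Finset.sum_congr rfl fun ω _ => ?_
  by_cases h : T ω = b ∧ V ω = v
  · simp [Prod.ext_iff, h.1, h.2]
  · rw [if_neg (by simp [Prod.ext_iff]; tauto)]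
    refine (Finset.sum_eq_zero fun a _ => if_neg (by simp [Prod.ext_iff]; tauto)).symm

lemma dist_marg_trd {Ω α β γ : Type*} [Fintype Ω] [Fintype α] [Fintype β]
    (μ : Ω → ℝ) (S : Ω → α) (T : Ω → β) (V : Ω → γ) (v : γ) :
    dist μ V v = ∑ a, ∑ b, dist μ (fun ω => (S ω, T ω, V ω)) (a, b, v) := by
  unfold _root_.dist
  beta_reduce
  refine Eq.trans ?_ (sum_rot _).symm
  refine Finset.sum_congr rfl fun ω _ => ?_
  by_cases h : V ω = v
  · simp [Prod.ext_iff, h, ite_and, Finset.sum_ite_eq]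
  · rw [if_neg h]
    refine (Finset.sum_eq_zero fun a _ => Finset.sum_eq_zero fun b _ =>
      if_neg (by simp [Prod.ext_iff]; tauto)).symm

lemma submod {Ω α β γ : Type*} [Fintype Ω] [Fintype α] [Fintype β] [Fintype γ]
    (μ : Ω → ℝ) (hμ0 : ∀ ω, 0 ≤ μ ω) (S : Ω → α) (T : Ω → β) (V : Ω → γ) :
    Hrv μ (fun ω => (S ω, T ω, V ω)) + Hrv μ V
      ≤ Hrv μ (fun ω => (S ω, V ω)) + Hrv μ (fun ω => (T ω, V ω)) := by
  classical
  have h := ent_key (dist μ (fun ω => (S ω, T ω, V ω)))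
    (fun x => dist_nonneg' μ hμ0 _ x)
  unfold Hrv
  have e1 : dist μ (fun ω => (S ω, V ω))
      = fun av : α × γ => ∑ b, dist μ (fun ω => (S ω, T ω, V ω)) (av.1, b, av.2) := by
    funext av
    exact dist_marg_fst μ S T V av.1 av.2
  have e2 : dist μ (fun ω => (T ω, V ω))
      = fun bv : β × γ => ∑ a, dist μ (fun ω => (S ω, T ω, V ω)) (a, bv.1, bv.2) := by
    funext bv
    exact dist_marg_snd μ S T V bv.1 bv.2
  have e3 : dist μ V
      = fun v : γ => ∑ a, ∑ b, dist μ (fun ω => (S ω, T ω, V ω)) (a, b, v) := by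
    funext v
    exact dist_marg_trd μ S T V v
  rw [e1, e2, e3]
  exact h

lemma condMutInf_mono {Ω α β β' γ : Type*} [Fintype Ω] [Fintype α] [Fintype β]
    [Fintype β'] [Fintype γ]
    (μ : Ω → ℝ) (hμ0 : ∀ ω, 0 ≤ μ ω) (X : Ω → α) (Y : Ω → β) (Y' : Ω → β') (Z : Ω → γ)
    (g : β' × γ → β) (hg : ∀ ω, Y ω = g (Y' ω, Z ω)) :
    condMutInf μ X Y Z ≤ condMutInf μ X Y' Z := by
  classical
  have hs : Hrv μ (fun ω => (X ω, Y' ω, Y ω, Z ω)) + Hrv μ (fun ω => (Y ω, Z ω))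
      ≤ Hrv μ (fun ω => (X ω, Y ω, Z ω)) + Hrv μ (fun ω => (Y' ω, Y ω, Z ω)) :=
    submod μ hμ0 X Y' (fun ω => (Y ω, Z ω))
  have c1 : Hrv μ (fun ω => (X ω, Y' ω, Y ω, Z ω)) = Hrv μ (fun ω => (X ω, Y' ω, Z ω)) := by
    refine Hrv_congr μ _ _ (fun t => (t.1, t.2.1, t.2.2.2))
      (fun t => (t.1, t.2.1, g (t.2.1, t.2.2), t.2.2)) (fun ω => rfl) (fun ω => ?_)
    simp only
    rw [← hg ω]
  have c2 : Hrv μ (fun ω => (Y' ω, Y ω, Z ω)) = Hrv μ (fun ω => (Y' ω, Z ω)) := by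
    refine Hrv_congr μ _ _ (fun t => (t.1, t.2.2))
      (fun t => (t.1, g (t.1, t.2), t.2)) (fun ω => rfl) (fun ω => ?_)
    simp only
    rw [← hg ω]
  rw [c1, c2] at hs
  unfold condMutInf
  linarith

lemma Hrv_const {Ω α : Type*} [Fintype Ω] [Fintype α]
    (μ : Ω → ℝ) (hμ1 : ∑ ω, μ ω = 1) (c : α) : Hrv μ (fun _ => c) = 0 := by
  have hd : dist μ (fun _ => c) = fun a => if c = a then 1 else 0 := by
    funext a
    unfold _root_.dist
    by_cases h : c = a
    · simp [h, hμ1]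
    · simp [h]
  unfold Hrv
  rw [hd]
  unfold ent
  rw [Finset.sum_eq_single c]
  · simp
  · intro b _ hb
    simp [Ne.symm hb]
  · simp
-- AUX END

/-- If each estimate `X̂_i` is a deterministic function of the codetree `U` and the past
source samples `X^{i-1}`, then `I(X^L; U) ≥ ∑_i I(X_i; X̂^i | X^{i-1})`, the right-hand
side being the directed information `I(X̂^L → X^L)`. -/
theorem stmt7 {Ω α β γ : Type*} [Fintype Ω] [Fintype α] [Fintype β] [Fintype γ]
    [Inhabited α] [Inhabited γ] (L : ℕ)
    (μ : Ω → ℝ) (hμ0 : ∀ ω, 0 ≤ μ ω) (hμ1 : ∑ ω, μ ω = 1)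
    (X : Fin L → Ω → α) (U : Ω → β) (Xhat : Fin L → Ω → γ)
    (hdet : ∀ i : Fin L, ∃ f : β × (Fin L → α) → γ,
      ∀ ω, Xhat i ω = f (U ω, pref X (i : ℕ) ω)) :
    mutInf μ (fun ω => fun j => X j ω) U ≥
      ∑ i : Fin L, condMutInf μ (X i) (pref Xhat ((i : ℕ) + 1)) (pref X (i : ℕ)) := by
  classical
  choose f hf using hdet
  -- Step 1: per-term bound
  have hterm : ∀ i : Fin L,
      condMutInf μ (X i) (pref Xhat ((i : ℕ) + 1)) (pref X (i : ℕ))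
        ≤ condMutInf μ (X i) U (pref X (i : ℕ)) := by
    intro i
    refine condMutInf_mono μ hμ0 (X i) _ U (pref X (i : ℕ))
      (fun uv => fun j => if (j : ℕ) < (i : ℕ) + 1
        then f j (uv.1, fun k => if (k : ℕ) < (j : ℕ) then uv.2 k else default)
        else default) ?_
    intro ω
    funext j
    simp only [pref]
    by_cases hj : (j : ℕ) < (i : ℕ) + 1
    · rw [if_pos hj, if_pos hj, hf j ω]
      congr 1
      refine Prod.ext rfl ?_
      funext k
      simp only [pref]
      by_cases hk : (k : ℕ) < (j : ℕ)
      · rw [if_pos hk, if_pos hk, if_pos (show (k:ℕ) < (i:ℕ) by omega)]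
      · rw [if_neg hk, if_neg hk]
    · rw [if_neg hj, if_neg hj]
  -- Step 2: chain rule (telescoping)
  have hper : ∀ i : Fin L, condMutInf μ (X i) U (pref X (i : ℕ))
      = (Hrv μ (pref X ((i : ℕ) + 1)) - Hrv μ (pref X (i : ℕ)))
        + (Hrv μ (fun ω => (U ω, pref X (i : ℕ) ω))
          - Hrv μ (fun ω => (U ω, pref X ((i : ℕ) + 1) ω))) := by
    intro i
    have e1 : Hrv μ (fun ω => (X i ω, pref X (i : ℕ) ω)) = Hrv μ (pref X ((i : ℕ) + 1)) := by
      refine Hrv_congr μ _ _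
        (fun t => fun j => if (j : ℕ) < (i : ℕ) then t.2 j
          else if (j : ℕ) = (i : ℕ) then t.1 else default)
        (fun w => (w i, fun j => if (j : ℕ) < (i : ℕ) then w j else default))
        (fun ω => ?_) (fun ω => ?_)
      · funext j
        simp only [pref]
        by_cases h1 : (j : ℕ) < (i : ℕ)
        · rw [if_pos (show (j:ℕ) < (i:ℕ)+1 by omega), if_pos h1, if_pos h1]
        · by_cases h2 : (j : ℕ) = (i : ℕ)
          · rw [if_pos (show (j:ℕ) < (i:ℕ)+1 by omega), if_neg h1, if_pos h2]
            exact congrArg (fun t => X t ω) (Fin.ext h2)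
          · rw [if_neg (show ¬((j:ℕ) < (i:ℕ)+1) by omega), if_neg h1, if_neg h2]
      · refine Prod.ext ?_ ?_
        · simp [pref]
        · funext j
          simp only [pref]
          by_cases h1 : (j : ℕ) < (i : ℕ)
          · rw [if_pos h1, if_pos (show (j:ℕ) < (i:ℕ)+1 by omega), if_pos h1]
          · rw [if_neg h1, if_neg h1]
    have e2 : Hrv μ (fun ω => (X i ω, U ω, pref X (i : ℕ) ω))
        = Hrv μ (fun ω => (U ω, pref X ((i : ℕ) + 1) ω)) := by
      refine Hrv_congr μ _ _
        (fun t => (t.2.1, fun j => if (j : ℕ) < (i : ℕ) then t.2.2 j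
          else if (j : ℕ) = (i : ℕ) then t.1 else default))
        (fun t => (t.2 i, t.1, fun j => if (j : ℕ) < (i : ℕ) then t.2 j else default))
        (fun ω => ?_) (fun ω => ?_)
      · refine Prod.ext rfl ?_
        funext j
        simp only [pref]
        by_cases h1 : (j : ℕ) < (i : ℕ)
        · rw [if_pos (show (j:ℕ) < (i:ℕ)+1 by omega), if_pos h1, if_pos h1]
        · by_cases h2 : (j : ℕ) = (i : ℕ)
          · rw [if_pos (show (j:ℕ) < (i:ℕ)+1 by omega), if_neg h1, if_pos h2]
            exact congrArg (fun t => X t ω) (Fin.ext h2)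
          · rw [if_neg (show ¬((j:ℕ) < (i:ℕ)+1) by omega), if_neg h1, if_neg h2]
      · refine Prod.ext ?_ (Prod.ext rfl ?_)
        · simp [pref]
        · funext j
          simp only [pref]
          by_cases h1 : (j : ℕ) < (i : ℕ)
          · rw [if_pos h1, if_pos (show (j:ℕ) < (i:ℕ)+1 by omega), if_pos h1]
          · rw [if_neg h1, if_neg h1]
    unfold condMutInf
    rw [e1, e2]
    ring
  have hsum : ∑ i : Fin L, condMutInf μ (X i) U (pref X (i : ℕ))
      = Hrv μ (pref X L) - Hrv μ (pref X 0)
        + (Hrv μ (fun ω => (U ω, pref X 0 ω)) - Hrv μ (fun ω => (U ω, pref X L ω))) := by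
    rw [Finset.sum_congr rfl (fun i _ => hper i)]
    rw [Fin.sum_univ_eq_sum_range (fun k =>
      (Hrv μ (pref X (k + 1)) - Hrv μ (pref X k))
        + (Hrv μ (fun ω => (U ω, pref X k ω)) - Hrv μ (fun ω => (U ω, pref X (k + 1) ω)))) L]
    rw [Finset.sum_add_distrib]
    rw [Finset.sum_range_sub (fun k => Hrv μ (pref X k)) L]
    rw [Finset.sum_range_sub' (fun k => Hrv μ (fun ω => (U ω, pref X k ω))) L]
  have hprefL : pref X L = (fun ω => fun j => X j ω) := by
    funext ω j
    simp [pref, j.isLt]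
  have hF0 : Hrv μ (pref X 0) = 0 := by
    have : pref X 0 = (fun _ => (fun _ => (default : α))) := by
      funext ω j
      simp [pref]
    rw [this]
    exact Hrv_const μ hμ1 _
  have hG0 : Hrv μ (fun ω => (U ω, pref X 0 ω)) = Hrv μ U := by
    refine Hrv_congr μ _ _ Prod.fst (fun u => (u, fun _ => default))
      (fun ω => rfl) (fun ω => ?_)
    refine Prod.ext rfl ?_
    funext j
    simp [pref]
  have hGL : Hrv μ (fun ω => (U ω, pref X L ω))
      = Hrv μ (fun ω => ((fun j => X j ω), U ω)) := by
    refine Hrv_congr μ _ _ Prod.swap Prod.swap (fun ω => by simp [hprefL]) (fun ω => by simp [hprefL])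
  rw [ge_iff_le]
  calc ∑ i : Fin L, condMutInf μ (X i) (pref Xhat ((i : ℕ) + 1)) (pref X (i : ℕ))
      ≤ ∑ i : Fin L, condMutInf μ (X i) U (pref X (i : ℕ)) :=
        Finset.sum_le_sum fun i _ => hterm i
    _ = mutInf μ (fun ω => fun j => X j ω) U := by
        rw [hsum, hF0, hG0, hGL, hprefL]
        unfold mutInf
        ring
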